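/- arXiv:2005.02221 — 2 statements merged into one kernel-verified Lean document; each statement's English description precedes it below -/
import Mathlib

section
/- Let (Π,α,l) : I → ℝ³ × ℝ × ℝ be differentiable on an open interval I and solve the reduced spacecraft–rotor equations with coincident centers: Π′(t) = Π(t) × Ω(Π(t),l(t)), α′(t) = −(Π₃(t) − l(t))/Ī₃ + l(t)/J₃, l′(t) = 0. Then for every continuously differentiable F : ℝ³ × ℝ × ℝ → ℝ, the derivative d/dt F(Π(t),α(t),l(t)) equals {F, H}₋(Π(t),α(t),l(t)) for all t ∈ I, where H(Π,α,l) = (1/2)[Π₁²/Ī₁ + Π₂²/Ī₂ + (Π₃ − l)²/Ī₃ + l²/J₃] (independent of α). That is, the reduced equations are Hamiltonian with respect to the minus Lie–Poisson bracket. -/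
open Matrix

/-- The body angular velocity `Ω(Π,l) = (Π₁/Ī₁, Π₂/Ī₂, (Π₃ − l)/Ī₃)`. -/
noncomputable def Om (I1 I2 I3 : ℝ) (P : Fin 3 → ℝ) (l : ℝ) : Fin 3 → ℝ :=
  ![P 0 / I1, P 1 / I2, (P 2 - l) / I3]

/-- Gradient in the `Π`-variables of a function on `𝔰𝔬*(3) × ℝ × ℝ* ≅ ℝ³ × ℝ × ℝ`. -/
noncomputable def gradPi (F : (Fin 3 → ℝ) × ℝ × ℝ → ℝ) (p : (Fin 3 → ℝ) × ℝ × ℝ) :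
    Fin 3 → ℝ :=
  fun i => fderiv ℝ F p (Pi.single i 1, 0, 0)

/-- Partial derivative with respect to `α`. -/
noncomputable def dAlpha (F : (Fin 3 → ℝ) × ℝ × ℝ → ℝ) (p : (Fin 3 → ℝ) × ℝ × ℝ) : ℝ :=
  fderiv ℝ F p (0, 1, 0)

/-- Partial derivative with respect to `l`. -/
noncomputable def dEll (F : (Fin 3 → ℝ) × ℝ × ℝ → ℝ) (p : (Fin 3 → ℝ) × ℝ × ℝ) : ℝ :=
  fderiv ℝ F p (0, 0, 1)

/-- The minus Lie–Poisson bracket on `𝔰𝔬*(3) × ℝ × ℝ*`. -/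
noncomputable def bracket (F K : (Fin 3 → ℝ) × ℝ × ℝ → ℝ)
    (p : (Fin 3 → ℝ) × ℝ × ℝ) : ℝ :=
  -(p.1 ⬝ᵥ crossProduct (gradPi F p) (gradPi K p))
    + dAlpha F p * dEll K p - dAlpha K p * dEll F p

/-- Reduced Hamiltonian of the spacecraft–rotor system with coincident centers,
viewed as a function of `(Π,α,l)` (independent of `α`). -/
noncomputable def Ham (I1 I2 I3 J3 : ℝ) (p : (Fin 3 → ℝ) × ℝ × ℝ) : ℝ :=
  (1/2) * ((p.1 0)^2 / I1 + (p.1 1)^2 / I2 + (p.1 2 - p.2.2)^2 / I3 + p.2.2^2 / J3)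

noncomputable def cc (i : Fin 3) : ((Fin 3 → ℝ) × ℝ × ℝ) →L[ℝ] ℝ :=
  (ContinuousLinearMap.proj i).comp (ContinuousLinearMap.fst ℝ (Fin 3 → ℝ) (ℝ × ℝ))

noncomputable def cL : ((Fin 3 → ℝ) × ℝ × ℝ) →L[ℝ] ℝ :=
  (ContinuousLinearMap.snd ℝ ℝ ℝ).comp (ContinuousLinearMap.snd ℝ (Fin 3 → ℝ) (ℝ × ℝ))

/-- Along any solution of the reduced spacecraft–rotor equations with coincident
centers, every `C¹` function `F` evolves by `d/dt F = {F, H}₋`: the reduced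
equations are Hamiltonian with respect to the minus Lie–Poisson bracket. -/
theorem reduced_equations_hamiltonian
    (I1 I2 I3 J3 : ℝ) (hI1 : 0 < I1) (hI2 : 0 < I2) (hI3 : 0 < I3) (hJ3 : 0 < J3)
    (a b : ℝ) (P : ℝ → Fin 3 → ℝ) (α l : ℝ → ℝ)
    (hP : ∀ t ∈ Set.Ioo a b,
      HasDerivAt P (crossProduct (P t) (Om I1 I2 I3 (P t) (l t))) t)
    (hα : ∀ t ∈ Set.Ioo a b,
      HasDerivAt α (-(P t 2 - l t) / I3 + l t / J3) t)
    (hl : ∀ t ∈ Set.Ioo a b, HasDerivAt l 0 t) :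
    ∀ F : (Fin 3 → ℝ) × ℝ × ℝ → ℝ, ContDiff ℝ 1 F →
      ∀ t ∈ Set.Ioo a b,
        HasDerivAt (fun s => F (P s, α s, l s))
          (bracket F (Ham I1 I2 I3 J3) (P t, α t, l t)) t := by
  intro F hF t ht
  set p : (Fin 3 → ℝ) × ℝ × ℝ := (P t, α t, l t) with hp
  set v : Fin 3 → ℝ := crossProduct (P t) (Om I1 I2 I3 (P t) (l t)) with hv
  set aα : ℝ := -(P t 2 - l t) / I3 + l t / J3 with haα
  -- derivative of the curve
  have hγ : HasDerivAt (fun s => ((P s, α s, l s) : (Fin 3 → ℝ) × ℝ × ℝ))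
      (v, aα, 0) t := (hP t ht).prodMk ((hα t ht).prodMk (hl t ht))
  have hFd : HasFDerivAt F (fderiv ℝ F p) p :=
    ((hF.differentiable one_ne_zero) p).hasFDerivAt
  have hcomp := hFd.comp_hasDerivAt t hγ
  -- fderiv of Ham
  have h0 : HasFDerivAt (fun q : (Fin 3 → ℝ) × ℝ × ℝ => q.1 0) (cc 0) p := (cc 0).hasFDerivAt
  have h1 : HasFDerivAt (fun q : (Fin 3 → ℝ) × ℝ × ℝ => q.1 1) (cc 1) p := (cc 1).hasFDerivAt
  have h2 : HasFDerivAt (fun q : (Fin 3 → ℝ) × ℝ × ℝ => q.1 2) (cc 2) p := (cc 2).hasFDerivAt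
  have hcl : HasFDerivAt (fun q : (Fin 3 → ℝ) × ℝ × ℝ => q.2.2) cL p := cL.hasFDerivAt
  have hfun : Ham I1 I2 I3 J3 = fun q : (Fin 3 → ℝ) × ℝ × ℝ =>
      (1/2 : ℝ) * (I1⁻¹ * (q.1 0 * q.1 0) + I2⁻¹ * (q.1 1 * q.1 1)
        + I3⁻¹ * ((q.1 2 - q.2.2) * (q.1 2 - q.2.2)) + J3⁻¹ * (q.2.2 * q.2.2)) := by
    funext q; simp only [Ham]; ring
  have hHam : HasFDerivAt (Ham I1 I2 I3 J3)
      ((1/2 : ℝ) • ((I1⁻¹ • (p.1 0 • cc 0 + p.1 0 • cc 0))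
        + (I2⁻¹ • (p.1 1 • cc 1 + p.1 1 • cc 1))
        + (I3⁻¹ • ((p.1 2 - p.2.2) • (cc 2 - cL) + (p.1 2 - p.2.2) • (cc 2 - cL)))
        + (J3⁻¹ • (p.2.2 • cL + p.2.2 • cL)))) p := by
    rw [hfun]
    exact (((((h0.mul h0).const_mul I1⁻¹).add ((h1.mul h1).const_mul I2⁻¹)).add
      (((h2.sub hcl).mul (h2.sub hcl)).const_mul I3⁻¹)).add
      ((hcl.mul hcl).const_mul J3⁻¹)).const_mul (1/2 : ℝ)
  have hfd := hHam.fderiv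
  -- compute partials of Ham
  have hg0 : gradPi (Ham I1 I2 I3 J3) p 0 = P t 0 / I1 := by
    simp only [gradPi, hfd]; simp [gradPi, hfd, cc, cL, hp, div_eq_inv_mul]; ring
  have hg1 : gradPi (Ham I1 I2 I3 J3) p 1 = P t 1 / I2 := by
    simp only [gradPi, hfd]; simp [gradPi, hfd, cc, cL, hp, div_eq_inv_mul]; ring
  have hg2 : gradPi (Ham I1 I2 I3 J3) p 2 = (P t 2 - l t) / I3 := by
    simp only [gradPi, hfd]; simp [gradPi, hfd, cc, cL, hp, div_eq_inv_mul]; ring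
  have hda : dAlpha (Ham I1 I2 I3 J3) p = 0 := by
    simp [dAlpha, hfd, cc, cL]
  have hde : dEll (Ham I1 I2 I3 J3) p = aα := by
    simp only [dEll, hfd]; simp [dEll, hfd, cc, cL, hp, haα, div_eq_inv_mul]; ring
  -- decompose the direction vector
  have hdec : ((v, aα, (0:ℝ)) : (Fin 3 → ℝ) × ℝ × ℝ)
      = v 0 • ((Pi.single 0 1 : Fin 3 → ℝ), (0:ℝ), (0:ℝ))
        + v 1 • ((Pi.single 1 1 : Fin 3 → ℝ), (0:ℝ), (0:ℝ))
        + v 2 • ((Pi.single 2 1 : Fin 3 → ℝ), (0:ℝ), (0:ℝ))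
        + aα • (((0:Fin 3 → ℝ)), (1:ℝ), (0:ℝ)) := by
    refine Prod.ext ?_ (Prod.ext ?_ ?_) <;> simp
    funext i; fin_cases i <;> simp
  have hval : (fderiv ℝ F p) (v, aα, 0)
      = v 0 * gradPi F p 0 + v 1 * gradPi F p 1 + v 2 * gradPi F p 2 + aα * dAlpha F p := by
    rw [hdec, map_add, map_add, map_add, ContinuousLinearMap.map_smul, ContinuousLinearMap.map_smul, ContinuousLinearMap.map_smul, ContinuousLinearMap.map_smul]
    simp only [gradPi, dAlpha, smul_eq_mul]
  refine hcomp.congr_deriv ?_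
  symm
  rw [hval, bracket]
  have hcross : ∀ (x y : Fin 3 → ℝ), crossProduct x y
      = ![x 1 * y 2 - x 2 * y 1, x 2 * y 0 - x 0 * y 2, x 0 * y 1 - x 1 * y 0] :=
    fun x y => cross_apply x y
  rw [hcross]
  simp only [hv, hcross, hda, hde, hg0, hg1, hg2]
  simp [dotProduct, Fin.sum_univ_three, Om, hp]
  ring
end

section
/- Let (Π,Γ,α,l) : I → ℝ³ × ℝ³ × ℝ × ℝ be differentiable on an open interval I and solve the reduced spacecraft–rotor equations with non-coincident centers: Π′(t) = Π(t) × Ω(Π(t),l(t)) + g·h·(Γ(t) × χ), Γ′(t) = Γ(t) × Ω(Π(t),l(t)), α′(t) = −(Π₃(t) − l(t))/Ī₃ + l(t)/J₃, l′(t) = 0. Then the Hamiltonian t ↦ H(Π(t),Γ(t),l(t)) = (1/2)[Π₁(t)²/Ī₁ + Π₂(t)²/Ī₂ + (Π₃(t) − l(t))²/Ī₃ + l(t)²/J₃] + g·h·(Γ(t) · χ) is constant on I. -/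
open Matrix

/-- Along any solution of the reduced spacecraft–rotor equations with non-coincident
centers of buoyancy and gravity, the Hamiltonian `H(Π,Γ,l)` is constant. -/
theorem hamiltonian_conserved_noncoincident
    (I1 I2 I3 J3 : ℝ) (hI1 : 0 < I1) (hI2 : 0 < I2) (hI3 : 0 < I3) (hJ3 : 0 < J3)
    (g h : ℝ) (χ : Fin 3 → ℝ) (hχ : χ ⬝ᵥ χ = 1)
    (a b : ℝ) (P Γ : ℝ → Fin 3 → ℝ) (α l : ℝ → ℝ)
    (hP : ∀ t ∈ Set.Ioo a b,
      HasDerivAt P (crossProduct (P t) (Om I1 I2 I3 (P t) (l t))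
        + (g * h) • crossProduct (Γ t) χ) t)
    (hΓ : ∀ t ∈ Set.Ioo a b,
      HasDerivAt Γ (crossProduct (Γ t) (Om I1 I2 I3 (P t) (l t))) t)
    (hα : ∀ t ∈ Set.Ioo a b,
      HasDerivAt α (-(P t 2 - l t) / I3 + l t / J3) t)
    (hl : ∀ t ∈ Set.Ioo a b, HasDerivAt l 0 t) :
    ∀ s ∈ Set.Ioo a b, ∀ t ∈ Set.Ioo a b,
      (1/2) * ((P s 0)^2 / I1 + (P s 1)^2 / I2 + (P s 2 - l s)^2 / I3
          + (l s)^2 / J3) + g * h * (Γ s ⬝ᵥ χ)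
        = (1/2) * ((P t 0)^2 / I1 + (P t 1)^2 / I2 + (P t 2 - l t)^2 / I3
            + (l t)^2 / J3) + g * h * (Γ t ⬝ᵥ χ) := by
  set H : ℝ → ℝ := fun t =>
    (1/2) * ((P t 0)^2 / I1 + (P t 1)^2 / I2 + (P t 2 - l t)^2 / I3
          + (l t)^2 / J3) + g * h * (Γ t ⬝ᵥ χ) with hH
  have key : ∀ t ∈ Set.Ioo a b, HasDerivAt H 0 t := by
    intro t ht
    have hP' := hP t ht
    have hΓ' := hΓ t ht
    have hl' := hl t ht
    rw [hasDerivAt_pi] at hP' hΓ'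
    have hP0 := hP' 0
    have hP1 := hP' 1
    have hP2 := hP' 2
    have hΓ0 := hΓ' 0
    have hΓ1 := hΓ' 1
    have hΓ2 := hΓ' 2
    simp only [crossProduct, Om, Pi.add_apply, Pi.smul_apply, smul_eq_mul,
      LinearMap.mk₂_apply, cons_val_zero, cons_val_one, head_cons,
      cons_val_two, tail_cons] at hP0 hP1 hP2 hΓ0 hΓ1 hΓ2
    have hd : HasDerivAt H
        ((1/2) * ((2 * P t 0 * (P t 1 * ((P t 2 - l t) / I3) - P t 2 * (P t 1 / I2) + g * h * (Γ t 1 * χ 2 - Γ t 2 * χ 1))) / I1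
          + (2 * P t 1 * (P t 2 * (P t 0 / I1) - P t 0 * ((P t 2 - l t) / I3) + g * h * (Γ t 2 * χ 0 - Γ t 0 * χ 2))) / I2
          + (2 * (P t 2 - l t) * ((P t 0 * (P t 1 / I2) - P t 1 * (P t 0 / I1) + g * h * (Γ t 0 * χ 1 - Γ t 1 * χ 0)) - 0)) / I3
          + (2 * l t * 0) / J3)
          + g * h * ((Γ t 1 * ((P t 2 - l t) / I3) - Γ t 2 * (P t 1 / I2)) * χ 0
            + (Γ t 2 * (P t 0 / I1) - Γ t 0 * ((P t 2 - l t) / I3)) * χ 1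
            + (Γ t 0 * (P t 1 / I2) - Γ t 1 * (P t 0 / I1)) * χ 2)) t := by
      have hdot : HasDerivAt (fun t => Γ t ⬝ᵥ χ)
          ((Γ t 1 * ((P t 2 - l t) / I3) - Γ t 2 * (P t 1 / I2)) * χ 0
            + (Γ t 2 * (P t 0 / I1) - Γ t 0 * ((P t 2 - l t) / I3)) * χ 1
            + (Γ t 0 * (P t 1 / I2) - Γ t 1 * (P t 0 / I1)) * χ 2) t := by
        simp only [dotProduct, Fin.sum_univ_three]
        exact ((hΓ0.mul_const _).add (hΓ1.mul_const _)).add (hΓ2.mul_const _)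
      have h0 : HasDerivAt (fun t => (P t 0)^2)
          (2 * P t 0 * (P t 1 * ((P t 2 - l t) / I3) - P t 2 * (P t 1 / I2) + g * h * (Γ t 1 * χ 2 - Γ t 2 * χ 1)))  t := by
        have := hP0.fun_pow 2; simpa [mul_comm, mul_assoc, mul_left_comm] using this
      have h1 : HasDerivAt (fun t => (P t 1)^2)
          (2 * P t 1 * (P t 2 * (P t 0 / I1) - P t 0 * ((P t 2 - l t) / I3) + g * h * (Γ t 2 * χ 0 - Γ t 0 * χ 2)))  t := by
        have := hP1.fun_pow 2; simpa [mul_comm, mul_assoc, mul_left_comm] using this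
      have h2 : HasDerivAt (fun t => (P t 2 - l t)^2)
          (2 * (P t 2 - l t) * ((P t 0 * (P t 1 / I2) - P t 1 * (P t 0 / I1) + g * h * (Γ t 0 * χ 1 - Γ t 1 * χ 0)) - 0))  t := by
        have := (hP2.sub hl').fun_pow 2; simpa [mul_comm, mul_assoc, mul_left_comm] using this
      have h3 : HasDerivAt (fun t => (l t)^2) (2 * l t * 0)  t := by
        have := hl'.fun_pow 2; simpa [mul_comm, mul_assoc, mul_left_comm] using this
      exact ((((h0.div_const I1).add (h1.div_const I2)).add (h2.div_const I3)).add
        (h3.div_const J3)).const_mul (1/2) |>.add (hdot.const_mul (g*h))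
    convert hd using 1
    field_simp
    ring
  -- constancy on the convex open set
  intro s hs t ht
  have hconv : Convex ℝ (Set.Ioo a b) := convex_Ioo a b
  have hdiff : DifferentiableOn ℝ H (Set.Ioo a b) := fun x hx =>
    (key x hx).differentiableAt.differentiableWithinAt
  have hfd : ∀ x ∈ Set.Ioo a b, fderivWithin ℝ H (Set.Ioo a b) x = 0 := by
    intro x hx
    rw [fderivWithin_eq_fderiv (isOpen_Ioo.uniqueDiffWithinAt hx) (key x hx).differentiableAt]
    have := (key x hx).hasFDerivAt.fderiv
    ext y; simp [this]
  exact hconv.is_const_of_fderivWithin_eq_zero hdiff hfd hs ht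
end
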